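/- Let A and B be disjoint sets with A nonempty, B infinite, and |A| ≤ |B|, and let S ∈ {A, B}. Then there exists a tree T on A ∪ B that codes A and satisfies Suc_T(⟨⟩) = S, where ⟨⟩ is the empty sequence (the root of T). -/

import Mathlib

/-- A tree on `X`: a nonempty set of finite sequences closed under initial segments. -/
def SeqTree.IsTree {X : Type*} (T : Set (List X)) : Prop :=
  T.Nonempty ∧ ∀ η ∈ T, ∀ ν : List X, ν <+: η → ν ∈ T

/-- `Suc_T(η) = {x : η⌢⟨x⟩ ∈ T}`. -/
def SeqTree.suc {X : Type*} (T : Set (List X)) (η : List X) : Set X :=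
  {x | η ++ [x] ∈ T}

/-- The descent relation used to compute the rank `rk(·, A')` in `T`:
`ν` lies below `μ` iff `ν` is a one-step extension of `μ` inside `T` and
`μ ∉ A'` (descent stops upon reaching `A'`).  `rk(η, A') < ∞` for all `η ∈ T`
iff this relation is well-founded, i.e. iff no infinite branch of `T` avoids `A'`. -/
def SeqTree.step {X : Type*} (T A' : Set (List X)) (ν μ : List X) : Prop :=
  ν ∈ T ∧ μ ∉ A' ∧ ∃ x, ν = μ ++ [x]

open Classical in
/-- The rank `rk(η, A')` of `η` with respect to `A'` (the rank of the converse
tree ordering on the extensions of `η` in `T` avoiding `A'` strictly in between),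
defined as an ordinal when it is `< ∞`, i.e. when the descent relation is
well-founded (and junk value `0` otherwise). -/
noncomputable def SeqTree.rk {X : Type*} (T A' : Set (List X)) (η : List X) : Ordinal :=
  if h : WellFounded (SeqTree.step T A') then
    @IsWellFounded.rank _ (SeqTree.step T A') ⟨h⟩ η
  else 0

/-- `T` (a tree on `A ∪ B`) codes `A`: (1) `Suc_T(η) ∈ {A, B}` for all `η ∈ T`;
(2) `rk(η, T^A) < ∞` for all `η ∈ T`, where `T^A = {η ∈ T : Suc_T(η) = A}`;
(3) `η ↦ rk(η, T^A \ {η})` is injective on `T^A`. -/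
def SeqTree.Codes {X : Type*} (T : Set (List X)) (A B : Set X) : Prop :=
  (∀ η ∈ T, SeqTree.suc T η = A ∨ SeqTree.suc T η = B) ∧
  WellFounded (SeqTree.step T {η ∈ T | SeqTree.suc T η = A}) ∧
  Set.InjOn (fun η => SeqTree.rk T ({ν ∈ T | SeqTree.suc T ν = A} \ {η}) η)
    {η ∈ T | SeqTree.suc T η = A}

namespace St10

universe u
variable {X : Type u}

section Defs

variable (A B : Set X) (dd : X → Ordinal.{u}) (al : List X → Ordinal.{u})
  (s0 : Option Ordinal.{u})

/-- transition of the state automaton: `p` is the parent node, `s` its state,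
`x` the next letter.  State `none` = labelled `A`; `some γ` = labelled `B` with
remaining ordinal `γ`. -/
noncomputable def trans (p : List X) (s : Option Ordinal.{u}) (x : X) : Option Ordinal.{u} :=
  match s with
  | none => some (al p)
  | some γ => if dd x < γ then some (dd x) else none

/-- state computed along the reversed list. -/
noncomputable def stRev : List X → Option Ordinal.{u}
  | [] => s0
  | x :: r => trans dd al r.reverse (stRev r) x

noncomputable def st (η : List X) : Option Ordinal.{u} := stRev dd al s0 η.reverse

noncomputable def lab (η : List X) : Set X :=
  match st dd al s0 η with
  | none => A
  | some _ => B

def inTrRev : List X → Prop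
  | [] => True
  | x :: r => inTrRev r ∧ x ∈ lab A B dd al s0 r.reverse

/-- the tree. -/
def Tr : Set (List X) := {η | inTrRev A B dd al s0 η.reverse}

/-- the set `T^A`. -/
def TAs : Set (List X) :=
  {η ∈ Tr A B dd al s0 | SeqTree.suc (Tr A B dd al s0) η = A}

end Defs

section Lemmas

variable {A B : Set X} {dd : X → Ordinal.{u}} {al : List X → Ordinal.{u}}
  {s0 : Option Ordinal.{u}}

local notation "TR" => Tr A B dd al s0
local notation "ST" => st dd al s0
local notation "LB" => lab A B dd al s0
local notation "TA" => TAs A B dd al s0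

theorem st_concat (η : List X) (x : X) :
    ST (η ++ [x]) = trans dd al η (ST η) x := by
  show stRev dd al s0 (η ++ [x]).reverse = _
  rw [List.reverse_append]
  show trans dd al η.reverse.reverse _ x = _
  rw [List.reverse_reverse]
  rfl

theorem st_concat_of_none {η : List X} (h : ST η = none) (x : X) :
    ST (η ++ [x]) = some (al η) := by
  rw [st_concat, h]; rfl

theorem st_concat_of_some {η : List X} {γ} (h : ST η = some γ) (x : X) :
    ST (η ++ [x]) = if dd x < γ then some (dd x) else none := by
  rw [st_concat, h]; rfl

theorem mem_Tr_concat {η : List X} {x : X} :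
    η ++ [x] ∈ TR ↔ η ∈ TR ∧ x ∈ LB η := by
  show inTrRev A B dd al s0 (η ++ [x]).reverse ↔ _
  rw [List.reverse_append]
  show inTrRev A B dd al s0 (x :: η.reverse) ↔ _
  simp [inTrRev, Tr, And.comm]

theorem nil_mem_Tr : ([] : List X) ∈ TR := by
  show inTrRev A B dd al s0 [].reverse
  simp [inTrRev]

theorem Tr_append {η l : List X} (h : η ++ l ∈ TR) : η ∈ TR := by
  induction l using List.reverseRecOn with
  | nil => simpa using h
  | append_singleton r x ih =>
    rw [← List.append_assoc] at h
    exact ih (mem_Tr_concat.1 h).1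

theorem Tr_isTree : SeqTree.IsTree TR := by
  refine ⟨⟨[], nil_mem_Tr⟩, fun η hη ν hpre => ?_⟩
  obtain ⟨l, rfl⟩ := hpre
  exact Tr_append hη

theorem suc_eq_lab {η : List X} (hη : η ∈ TR) : SeqTree.suc TR η = LB η := by
  ext x
  simp only [SeqTree.suc, Set.mem_setOf_eq, mem_Tr_concat]
  exact ⟨fun h => h.2, fun h => ⟨hη, h⟩⟩

theorem lab_eq_A_iff (hAB : A ≠ B) {η : List X} : LB η = A ↔ ST η = none := by
  unfold lab
  cases h : ST η with
  | none => simp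
  | some γ => simpa using fun h => hAB h.symm

theorem mem_TA_iff (hAB : A ≠ B) {η : List X} (hη : η ∈ TR) :
    η ∈ TA ↔ ST η = none := by
  rw [← lab_eq_A_iff hAB]
  show η ∈ TR ∧ _ ↔ _
  simp [hη, suc_eq_lab hη]

theorem not_mem_TA (hAB : A ≠ B) {η : List X} {γ} (hst : ST η = some γ) : η ∉ TA := by
  intro h
  have := (mem_TA_iff hAB h.1).1 h
  rw [hst] at this
  exact Option.some_ne_none γ this

theorem lab_subset (ν : List X) : LB ν ⊆ A ∪ B := by
  unfold lab
  cases ST ν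
  · exact Set.subset_union_left
  · exact Set.subset_union_right

theorem Tr_entries {η : List X} (hη : η ∈ TR) : ∀ x ∈ η, x ∈ A ∪ B := by
  induction η using List.reverseRecOn with
  | nil => simp
  | append_singleton r x ih =>
    obtain ⟨hr, hx⟩ := mem_Tr_concat.1 hη
    intro y hy
    rcases List.mem_append.1 hy with hy | hy
    · exact ih hr y hy
    · rw [List.mem_singleton] at hy
      exact hy ▸ lab_subset r hx

theorem acc_of_mem {A' : Set (List X)} {ν : List X} (h : ν ∈ A') :
    Acc (SeqTree.step TR A') ν :=
  Acc.intro ν fun _ hc => absurd h hc.2.1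

theorem acc_of_not_mem_Tr {A' : Set (List X)} {ν : List X} (h : ν ∉ TR) :
    Acc (SeqTree.step TR A') ν := by
  refine Acc.intro ν fun c hc => absurd ?_ h
  obtain ⟨hcT, -, x, rfl⟩ := hc
  exact Tr_append hcT

/-- key accessibility lemma for `B`-region nodes. -/
theorem acc_region {A' : Set (List X)}
    (hext : ∀ ν ∈ TR, ST ν = none → Acc (SeqTree.step TR A') ν ∨ ν ∈ A') :
    ∀ γ : Ordinal.{u}, ∀ μ ∈ TR, ST μ = some γ → Acc (SeqTree.step TR A') μ := by
  intro γ
  induction γ using Ordinal.induction with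
  | h γ ih =>
    intro μ hμ hst
    refine Acc.intro μ fun ν hν => ?_
    obtain ⟨hνT, -, x, rfl⟩ := hν
    by_cases hlt : dd x < γ
    · exact ih (dd x) hlt _ hνT (by rw [st_concat_of_some hst]; simp [hlt])
    · have hnone : ST (μ ++ [x]) = none := by
        rw [st_concat_of_some hst]; simp [hlt]
      rcases hext _ hνT hnone with h | h
      · exact h
      · exact acc_of_mem h

theorem wf_TA (hAB : A ≠ B) : WellFounded (SeqTree.step TR TA) := by
  constructor
  intro μ
  by_cases hμ : μ ∈ TR
  · cases hst : ST μ with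
    | none => exact acc_of_mem ((mem_TA_iff hAB hμ).2 hst)
    | some γ =>
      exact acc_region (fun ν hν h0 => Or.inr ((mem_TA_iff hAB hν).2 h0)) γ μ hμ hst
  · exact acc_of_not_mem_Tr hμ

theorem wf_TA' (hAB : A ≠ B) {η : List X} (hη : η ∈ TA) :
    WellFounded (SeqTree.step TR (TA \ {η})) := by
  have hηT : η ∈ TR := hη.1
  have hηst : ST η = none := (mem_TA_iff hAB hηT).1 hη
  have step1 : ∀ γ : Ordinal.{u}, ∀ μ ∈ TR, ST μ = some γ → η.length < μ.length →
      Acc (SeqTree.step TR (TA \ {η})) μ := by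
    intro γ
    induction γ using Ordinal.induction with
    | h γ ih =>
      intro μ hμ hst hlen
      refine Acc.intro μ fun ν hν => ?_
      obtain ⟨hνT, -, x, rfl⟩ := hν
      have hlen' : η.length < (μ ++ [x]).length := by
        simp only [List.length_append, List.length_singleton]; omega
      by_cases hlt : dd x < γ
      · exact ih (dd x) hlt _ hνT (by rw [st_concat_of_some hst]; simp [hlt]) hlen'
      · have hnone : ST (μ ++ [x]) = none := by
          rw [st_concat_of_some hst]; simp [hlt]
        refine acc_of_mem ⟨(mem_TA_iff hAB hνT).2 hnone, ?_⟩
        intro hcon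
        rw [Set.mem_singleton_iff] at hcon
        subst hcon
        simp only [List.length_append, List.length_singleton] at hlen'
        omega
  have step2 : Acc (SeqTree.step TR (TA \ {η})) η := by
    refine Acc.intro η fun ν hν => ?_
    obtain ⟨hνT, -, x, rfl⟩ := hν
    refine step1 (al η) _ hνT (st_concat_of_none hηst x) (by simp)
  have step3 : ∀ γ : Ordinal.{u}, ∀ μ ∈ TR, ST μ = some γ →
      Acc (SeqTree.step TR (TA \ {η})) μ := by
    refine acc_region (fun ν hν h0 => ?_)
    by_cases heq : ν = η
    · exact Or.inl (heq ▸ step2)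
    · exact Or.inr ⟨(mem_TA_iff hAB hν).2 h0, heq⟩
  constructor
  intro μ
  by_cases hμ : μ ∈ TR
  · cases hst : ST μ with
    | none =>
      by_cases heq : μ = η
      · exact heq ▸ step2
      · exact acc_of_mem ⟨(mem_TA_iff hAB hμ).2 hst, heq⟩
    | some γ => exact step3 γ μ hμ hst
  · exact acc_of_not_mem_Tr hμ

theorem lab_of_some {η : List X} {γ} (h : ST η = some γ) : LB η = B := by
  unfold lab; rw [h]

variable (A B dd al s0) in
/-- rank with an explicit well-foundedness certificate. -/
noncomputable def rnk (A' : Set (List X))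
    (wf : WellFounded (SeqTree.step (Tr A B dd al s0) A')) (ν : List X) : Ordinal.{u} :=
  @IsWellFounded.rank _ (SeqTree.step (Tr A B dd al s0) A') ⟨wf⟩ ν

theorem rnk_eq {A' : Set (List X)}
    (wf : WellFounded (SeqTree.step (Tr A B dd al s0) A')) (ν : List X) :
    rnk A B dd al s0 A' wf ν =
      ⨆ b : {b // SeqTree.step TR A' b ν}, Order.succ (rnk A B dd al s0 A' wf b.1) :=
  @IsWellFounded.rank_eq _ (SeqTree.step TR A') ⟨wf⟩ ν

theorem rnk_lt_of_rel {A' : Set (List X)}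
    (wf : WellFounded (SeqTree.step (Tr A B dd al s0) A')) {b ν : List X}
    (h : SeqTree.step TR A' b ν) : rnk A B dd al s0 A' wf b < rnk A B dd al s0 A' wf ν := by
  haveI : IsWellFounded (List X) (SeqTree.step TR A') := ⟨wf⟩
  exact IsWellFounded.rank_lt_of_rel h

theorem rnk_zero {A' : Set (List X)}
    (wf : WellFounded (SeqTree.step (Tr A B dd al s0) A')) {ν : List X} (h : ν ∈ A') :
    rnk A B dd al s0 A' wf ν = 0 := by
  haveI : IsEmpty {b // SeqTree.step TR A' b ν} := ⟨fun b => b.2.2.1 h⟩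
  rw [rnk_eq, ciSup_of_empty]
  simp

local notation "RK" => rnk A B dd al s0

/-- same-state region nodes have the same rank. -/
theorem rank_region_congr (hAB : A ≠ B) :
    ∀ γ : Ordinal.{u}, ∀ ν ∈ TR, ∀ ν' ∈ TR, ST ν = some γ → ST ν' = some γ →
      RK TA (wf_TA hAB) ν = RK TA (wf_TA hAB) ν' := by
  intro γ
  induction γ using Ordinal.induction with
  | h γ ih =>
    have key : ∀ μ ∈ TR, ∀ μ' ∈ TR, ST μ = some γ → ST μ' = some γ →
        RK TA (wf_TA hAB) μ ≤ RK TA (wf_TA hAB) μ' := by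
      intro μ hμ μ' hμ' hst hst'
      rw [rnk_eq]
      apply Ordinal.iSup_le
      rintro ⟨b, hbT, -, x, rfl⟩
      have hx : x ∈ LB μ := (mem_Tr_concat.1 hbT).2
      have hxB : x ∈ B := by rwa [lab_of_some hst] at hx
      have hb'T : μ' ++ [x] ∈ TR :=
        mem_Tr_concat.2 ⟨hμ', by rwa [lab_of_some hst']⟩
      have hrel' : SeqTree.step TR TA (μ' ++ [x]) μ' :=
        ⟨hb'T, not_mem_TA hAB hst', x, rfl⟩
      have heqr : RK TA (wf_TA hAB) (μ ++ [x]) = RK TA (wf_TA hAB) (μ' ++ [x]) := by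
        by_cases hlt : dd x < γ
        · exact ih (dd x) hlt _ hbT _ hb'T
            (by rw [st_concat_of_some hst]; simp [hlt])
            (by rw [st_concat_of_some hst']; simp [hlt])
        · have h1 : ST (μ ++ [x]) = none := by
            rw [st_concat_of_some hst]; simp [hlt]
          have h2 : ST (μ' ++ [x]) = none := by
            rw [st_concat_of_some hst']; simp [hlt]
          rw [rnk_zero _ ((mem_TA_iff hAB hbT).2 h1),
            rnk_zero _ ((mem_TA_iff hAB hb'T).2 h2)]
      rw [heqr]
      exact Order.succ_le_of_lt (rnk_lt_of_rel _ hrel')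
    exact fun ν hν ν' hν' h h' =>
      le_antisymm (key ν hν ν' hν' h h') (key ν' hν' ν hν h' h)

/-- below (strictly longer than) `η`, the rank w.r.t. `T^A - {η}` agrees with the
rank w.r.t. `T^A`. -/
theorem rank_below_congr (hAB : A ≠ B) {η : List X} (hη : η ∈ TA) :
    ∀ ν, η.length < ν.length →
      RK (TA \ {η}) (wf_TA' hAB hη) ν = RK TA (wf_TA hAB) ν := by
  intro ν
  induction ν using (wf_TA (A := A) (B := B) (dd := dd) (al := al) (s0 := s0) hAB).induction with
  | _ ν ih =>
    intro hlen
    have hne : ν ≠ η := fun h => by subst h; omega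
    by_cases hTA : ν ∈ TA
    · rw [rnk_zero _ (⟨hTA, hne⟩ : ν ∈ TA \ {η}), rnk_zero _ hTA]
    · have hstep : ∀ b, SeqTree.step TR (TA \ {η}) b ν ↔ SeqTree.step TR TA b ν := by
        intro b
        constructor
        · rintro ⟨hbT, -, x, rfl⟩; exact ⟨hbT, hTA, x, rfl⟩
        · rintro ⟨hbT, -, x, rfl⟩
          exact ⟨hbT, fun h => hTA h.1, x, rfl⟩
      have hlen2 : ∀ x : X, η.length < (ν ++ [x]).length := by
        intro x
        simp only [List.length_append, List.length_singleton]; omega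
      apply le_antisymm
      · rw [rnk_eq]
        apply Ordinal.iSup_le
        rintro ⟨b, hb⟩
        obtain ⟨hbT, hν', x, rfl⟩ := id hb
        rw [ih _ ((hstep _).1 hb) (hlen2 x)]
        exact Order.succ_le_of_lt (rnk_lt_of_rel _ ((hstep _).1 hb))
      · rw [rnk_eq (wf := wf_TA hAB)]
        apply Ordinal.iSup_le
        rintro ⟨b, hb⟩
        obtain ⟨hbT, hν', x, rfl⟩ := id hb
        rw [← ih _ hb (hlen2 x)]
        exact Order.succ_le_of_lt (rnk_lt_of_rel _ ((hstep _).2 hb))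

theorem rk_eq_rnk {A' : Set (List X)}
    (wf : WellFounded (SeqTree.step (Tr A B dd al s0) A')) (ν : List X) :
    SeqTree.rk TR A' ν = RK A' wf ν := by
  simp only [SeqTree.rk]
  rw [dif_pos wf]
  rfl

theorem main_inj (hAB : A ≠ B) (hAne : A.Nonempty)
    (hreal : ∀ η ∈ TR, ST η = none → ∃ b ∈ B, dd b = al η)
    (hinj : ∀ η ∈ TR, ∀ η' ∈ TR, ST η = none → ST η' = none → al η = al η' → η = η') :
    Set.InjOn (fun η => SeqTree.rk TR (TA \ {η}) η) TA := by
  obtain ⟨a₀, ha₀⟩ := hAne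
  have key : ∀ η ∈ TA, ∀ η' ∈ TA, al η < al η' →
      SeqTree.rk TR (TA \ {η}) η < SeqTree.rk TR (TA \ {η'}) η' := by
    intro η hη η' hη' hlt
    have hηT : η ∈ TR := hη.1
    have hη'T : η' ∈ TR := hη'.1
    have hst : ST η = none := (mem_TA_iff hAB hηT).1 hη
    have hst' : ST η' = none := (mem_TA_iff hAB hη'T).1 hη'
    obtain ⟨b₀, hb₀B, hdd⟩ := hreal η hηT hst
    -- the witness child of η' and its B-child of state `al η`
    have hν'T : η' ++ [a₀] ∈ TR :=
      mem_Tr_concat.2 ⟨hη'T, ((lab_eq_A_iff hAB).2 hst').symm ▸ ha₀⟩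
    have hstν' : ST (η' ++ [a₀]) = some (al η') := st_concat_of_none hst' a₀
    have hcT : η' ++ [a₀] ++ [b₀] ∈ TR :=
      mem_Tr_concat.2 ⟨hν'T, (lab_of_some hstν').symm ▸ hb₀B⟩
    have hstc : ST (η' ++ [a₀] ++ [b₀]) = some (al η) := by
      rw [st_concat_of_some hstν', hdd, if_pos hlt]
    have hcrel : SeqTree.step TR TA (η' ++ [a₀] ++ [b₀]) (η' ++ [a₀]) :=
      ⟨hcT, not_mem_TA hAB hstν', b₀, rfl⟩
    have hclt : RK TA (wf_TA hAB) (η' ++ [a₀] ++ [b₀]) < RK TA (wf_TA hAB) (η' ++ [a₀]) :=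
      rnk_lt_of_rel _ hcrel
    rw [rk_eq_rnk (wf_TA' hAB hη), rk_eq_rnk (wf_TA' hAB hη')]
    have upper : RK (TA \ {η}) (wf_TA' hAB hη) η ≤ RK TA (wf_TA hAB) (η' ++ [a₀]) := by
      rw [rnk_eq]
      apply Ordinal.iSup_le
      rintro ⟨b, hb⟩
      obtain ⟨hbT, -, x, rfl⟩ := id hb
      have hlenb : η.length < (η ++ [x]).length := by simp
      have hstb : ST (η ++ [x]) = some (al η) := st_concat_of_none hst x
      rw [rank_below_congr hAB hη _ hlenb,
        rank_region_congr hAB (al η) _ hbT _ hcT hstb hstc]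
      exact Order.succ_le_of_lt hclt
    have lower : RK TA (wf_TA hAB) (η' ++ [a₀]) < RK (TA \ {η'}) (wf_TA' hAB hη') η' := by
      have hrel : SeqTree.step TR (TA \ {η'}) (η' ++ [a₀]) η' :=
        ⟨hν'T, fun h => h.2 rfl, a₀, rfl⟩
      have hlen : η'.length < (η' ++ [a₀]).length := by simp
      rw [← rank_below_congr hAB hη' _ hlen]
      exact rnk_lt_of_rel _ hrel
    exact lt_of_le_of_lt upper lower
  intro η hη η' hη' heq
  by_contra hne
  have hal : al η ≠ al η' := fun h =>
    hne (hinj η hη.1 η' hη'.1 ((mem_TA_iff hAB hη.1).1 hη) ((mem_TA_iff hAB hη'.1).1 hη') h)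
  rcases hal.lt_or_gt with h | h
  · exact absurd heq (ne_of_lt (key η hη η' hη' h))
  · exact absurd heq.symm (ne_of_lt (key η' hη' η hη h))

theorem main_codes (hAB : A ≠ B) (hAne : A.Nonempty)
    (hreal : ∀ η ∈ TR, ST η = none → ∃ b ∈ B, dd b = al η)
    (hinj : ∀ η ∈ TR, ∀ η' ∈ TR, ST η = none → ST η' = none → al η = al η' → η = η') :
    SeqTree.Codes TR A B := by
  refine ⟨?_, wf_TA hAB, main_inj hAB hAne hreal hinj⟩
  intro η hη
  rw [suc_eq_lab hη]
  unfold lab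
  cases ST η
  · exact Or.inl rfl
  · exact Or.inr rfl

end Lemmas

end St10

section Final

universe u
variable {X : Type u}

open St10

open Classical in
noncomputable def ddF (B : Set X) : X → Ordinal.{u} :=
  fun x => if h : x ∈ B then Ordinal.typein (@WellOrderingRel B) ⟨x, h⟩ else 0

theorem ddF_coe {B : Set X} (e : B) : ddF B (e : X) = Ordinal.typein (@WellOrderingRel B) e := by
  classical
  rw [ddF]
  rw [dif_pos e.2, Subtype.coe_eta]

theorem ddF_inj {B : Set X} {b b' : X} (hb : b ∈ B) (hb' : b' ∈ B)
    (h : ddF B b = ddF B b') : b = b' := by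
  classical
  simp only [ddF] at h
  rw [dif_pos hb, dif_pos hb'] at h
  have := Ordinal.typein_injective (@WellOrderingRel B) h
  exact congrArg Subtype.val this

open Classical in
noncomputable def alF (A B : Set X) (emb : List ↑(A ∪ B) ↪ ↑B) : List X → Ordinal.{u} :=
  fun l => if h : ∀ x ∈ l, x ∈ A ∪ B then
    ddF B ((emb (l.pmap (fun x hx => ⟨x, hx⟩) h) : B) : X) else 0

theorem alF_eq {A B : Set X} (emb : List ↑(A ∪ B) ↪ ↑B) {l : List X}
    (h : ∀ x ∈ l, x ∈ A ∪ B) :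
    alF A B emb l = ddF B ((emb (l.pmap (fun x hx => ⟨x, hx⟩) h) : B) : X) := by
  classical
  rw [alF]
  rw [dif_pos h]

theorem alF_real {A B : Set X} (emb : List ↑(A ∪ B) ↪ ↑B) {l : List X}
    (h : ∀ x ∈ l, x ∈ A ∪ B) :
    ∃ b ∈ B, ddF B b = alF A B emb l := by
  refine ⟨(emb (l.pmap (fun x hx => ⟨x, hx⟩) h) : B), (emb _).2, ?_⟩
  rw [alF_eq emb h]

theorem alF_inj {A B : Set X} (emb : List ↑(A ∪ B) ↪ ↑B) {l l' : List X}
    (h : ∀ x ∈ l, x ∈ A ∪ B) (h' : ∀ x ∈ l', x ∈ A ∪ B)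
    (heq : alF A B emb l = alF A B emb l') : l = l' := by
  rw [alF_eq emb h, alF_eq emb h'] at heq
  have h1 := ddF_inj (emb _).2 (emb _).2 heq
  have h2 := emb.injective (Subtype.ext h1)
  have h3 := congrArg (List.map Subtype.val) h2
  simpa [List.map_pmap] using h3

end Final


open St10 in
/-- If `A` and `B` are disjoint, `A ≠ ∅`, `B` is infinite and `|A| ≤ |B|`, then
for `S ∈ {A, B}` there is a tree `T` on `A ∪ B` coding `A` with `Suc_T(⟨⟩) = S`. -/
theorem stmt10 {X : Type*} (A B : Set X) (hdisj : Disjoint A B)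
    (hA : A.Nonempty) (hB : B.Infinite)
    (hcard : Cardinal.mk A ≤ Cardinal.mk B)
    (S : Set X) (hS : S = A ∨ S = B) :
    ∃ T : Set (List X), SeqTree.IsTree T ∧
      (∀ η ∈ T, ∀ x ∈ η, x ∈ A ∪ B) ∧
      SeqTree.Codes T A B ∧
      SeqTree.suc T [] = S := by
  classical
  obtain ⟨a₀, ha₀⟩ := hA
  have hAB : A ≠ B := by
    intro h
    exact Set.disjoint_left.1 hdisj ha₀ (h ▸ ha₀)
  haveI : Nonempty ↑(A ∪ B) := ⟨⟨a₀, Or.inl ha₀⟩⟩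
  haveI : Infinite ↑B := hB.to_subtype
  have hcards : Cardinal.mk (List ↑(A ∪ B)) ≤ Cardinal.mk ↑B := by
    rw [Cardinal.mk_list_eq_max_mk_aleph0]
    apply max_le
    · calc Cardinal.mk ↑(A ∪ B) ≤ Cardinal.mk ↑A + Cardinal.mk ↑B := Cardinal.mk_union_le A B
        _ ≤ Cardinal.mk ↑B + Cardinal.mk ↑B := add_le_add_left hcard _
        _ = Cardinal.mk ↑B := Cardinal.add_eq_self (Cardinal.aleph0_le_mk ↑B)
    · exact Cardinal.aleph0_le_mk ↑B
  obtain ⟨emb⟩ := Cardinal.le_def _ _ |>.1 hcards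
  set dd := ddF B with hdd
  set al := alF A B emb with hal
  -- root state
  set s0 : Option Ordinal := if S = A then none else some 0 with hs0
  refine ⟨Tr A B dd al s0, Tr_isTree, fun η hη => Tr_entries hη, ?_, ?_⟩
  · refine main_codes hAB ⟨a₀, ha₀⟩ ?_ ?_
    · intro η hη _
      exact alF_real emb (Tr_entries hη)
    · intro η hη η' hη' _ _ heq
      exact alF_inj emb (Tr_entries hη) (Tr_entries hη') heq
  · have hstnil : st dd al s0 ([] : List X) = s0 := rfl
    rw [suc_eq_lab nil_mem_Tr]
    unfold lab
    rw [hstnil]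
    rcases hS with rfl | rfl
    · rw [hs0, if_pos rfl]
    · rw [hs0, if_neg (Ne.symm hAB)]
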